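/- Let V and W be finite types, φ : V × W → ℝ, and define the linear map T sending ψ : V × W → ℝ to T ψ : V → ℝ given by (T ψ)(v) = ∑_{w ∈ W} φ(v, w) · ψ(v, w). Let B be a compact convex subset of the space V × W → ℝ such that for every ψ ∈ B the function T ψ is nonnegative and has positive total sum ∑_{v ∈ V} (T ψ)(v) > 0. Then: (i) the set 𝒩(T '' B) is convex, and (ii) the extreme points of 𝒩(T '' B) are contained in 𝒩(T '' ext(B)), where ext denotes extreme points and 𝒩 is the normalization operator 𝒩(S) = { g / (∑_{v ∈ V} g(v)) : g ∈ S } on sets of functions V → ℝ. -/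

import Mathlib

/-- The normalization operator: each function in `S` is divided by its total sum. -/
noncomputable def normSet {V : Type*} [Fintype V] (S : Set (V → ℝ)) : Set (V → ℝ) :=
  {g | ∃ ψ' ∈ S, g = (∑ v, ψ' v)⁻¹ • ψ'}

section Aux

variable {V : Type*} [Fintype V]

lemma sum_combo_aux (x1 x2 : V → ℝ) (t u : ℝ) :
    ∑ v, (t • x1 + u • x2) v = t * ∑ v, x1 v + u * ∑ v, x2 v := by
  simp [Finset.sum_add_distrib, Finset.mul_sum]

lemma norm_combo_aux (x1 x2 : V → ℝ) (t u : ℝ)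
    (h1 : (∑ v, x1 v) ≠ 0) (h2 : (∑ v, x2 v) ≠ 0)
    (hS : t * ∑ v, x1 v + u * ∑ v, x2 v ≠ 0) :
    (∑ v, (t • x1 + u • x2) v)⁻¹ • (t • x1 + u • x2)
      = ((t * ∑ v, x1 v) / (t * ∑ v, x1 v + u * ∑ v, x2 v)) • ((∑ v, x1 v)⁻¹ • x1)
        + ((u * ∑ v, x2 v) / (t * ∑ v, x1 v + u * ∑ v, x2 v)) • ((∑ v, x2 v)⁻¹ • x2) := by
  rw [sum_combo_aux, smul_add, smul_smul, smul_smul, smul_smul, smul_smul]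
  congr 1
  · congr 1
    field_simp
  · congr 1
    field_simp

end Aux

/-- The message-bound update `𝒩(T '' B)` of Anytime Exact Belief Propagation is a
convex set whose extreme points arise from extreme points of the input bound `B`. -/
theorem normSet_sum_product_image_convex_and_extremePoints
    (V W : Type*) [Fintype V] [Fintype W] (φ : V × W → ℝ)
    (T : (V × W → ℝ) →ₗ[ℝ] (V → ℝ))
    (hT : ∀ ψ v, T ψ v = ∑ w : W, φ (v, w) * ψ (v, w))
    (B : Set (V × W → ℝ)) (hB : Convex ℝ B) (hBcomp : IsCompact B)
    (hnonneg : ∀ ψ ∈ B, ∀ v, 0 ≤ T ψ v)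
    (hsum : ∀ ψ ∈ B, 0 < ∑ v, T ψ v) :
    Convex ℝ (normSet (T '' B)) ∧
      Set.extremePoints ℝ (normSet (T '' B)) ⊆
        normSet (T '' (Set.extremePoints ℝ B)) := by
  constructor
  · -- convexity
    rintro g1 ⟨x1, ⟨ψ1, hψ1, rfl⟩, rfl⟩ g2 ⟨x2, ⟨ψ2, hψ2, rfl⟩, rfl⟩ t u ht hu htu
    set s1 := ∑ v, T ψ1 v with hs1def
    set s2 := ∑ v, T ψ2 v with hs2def
    have hs1 : 0 < s1 := hsum ψ1 hψ1
    have hs2 : 0 < s2 := hsum ψ2 hψ2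
    set K : ℝ := t / s1 + u / s2 with hKdef
    have hK : 0 < K := by
      rcases lt_or_eq_of_le ht with ht' | ht'
      · have : 0 < t / s1 := div_pos ht' hs1
        have : 0 ≤ u / s2 := div_nonneg hu hs2.le
        positivity
      · have hu' : 0 < u := by nlinarith
        have : 0 < u / s2 := div_pos hu' hs2
        have : 0 ≤ t / s1 := div_nonneg ht hs1.le
        positivity
    set a : ℝ := (t / s1) / K with hadef
    set b : ℝ := (u / s2) / K with hbdef
    have ha : 0 ≤ a := div_nonneg (div_nonneg ht hs1.le) hK.le
    have hb : 0 ≤ b := div_nonneg (div_nonneg hu hs2.le) hK.le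
    have hab : a + b = 1 := by
      rw [hadef, hbdef, ← add_div, hKdef, div_self hK.ne']
    have hmem : a • ψ1 + b • ψ2 ∈ B := hB hψ1 hψ2 ha hb hab
    refine ⟨T (a • ψ1 + b • ψ2), ⟨_, hmem, rfl⟩, ?_⟩
    have hTlin : T (a • ψ1 + b • ψ2) = a • T ψ1 + b • T ψ2 := by
      simp [map_add, map_smul]
    rw [hTlin]
    have has1 : a * s1 = t / K := by
      rw [hadef]; field_simp
    have hbs2 : b * s2 = u / K := by
      rw [hbdef]; field_simp
    have hSval : a * s1 + b * s2 = 1 / K := by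
      rw [has1, hbs2, ← add_div, htu]
    have hS : a * s1 + b * s2 ≠ 0 := by
      rw [hSval]; positivity
    have hc1 : t / K / (1 / K) = t := by field_simp
    have hc2 : u / K / (1 / K) = u := by field_simp
    rw [norm_combo_aux (T ψ1) (T ψ2) a b hs1.ne' hs2.ne' hS]
    rw [has1, hbs2, ← add_div, htu, hc1, hc2]
  · -- extreme points
    rintro g hg
    obtain ⟨hgmem, hgext⟩ := hg
    obtain ⟨x0, ⟨β0, hβ0, rfl⟩, rfl⟩ := hgmem
    set g : V → ℝ := (∑ v, T β0 v)⁻¹ • T β0 with hgdef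
    -- the fiber of the normalization map over g, inside B
    set F : Set (V × W → ℝ) := {β ∈ B | T β = (∑ v, T β v) • g} with hFdef
    have hginv : ∀ β ∈ B, ((∑ v, T β v)⁻¹ • T β = g ↔ T β = (∑ v, T β v) • g) := by
      intro β hβ
      rw [inv_smul_eq_iff₀ (hsum β hβ).ne']
    have hβ0F : β0 ∈ F := ⟨hβ0, ((hginv β0 hβ0).1 rfl)⟩
    -- F is compact
    have hTcont : Continuous fun β : V × W → ℝ => T β := T.continuous_of_finiteDimensional
    have hFclosed : IsClosed F := by
      have h1 : IsClosed {β : V × W → ℝ | T β = (∑ v, T β v) • g} := by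
        apply isClosed_eq hTcont
        exact ((continuous_finset_sum _ fun v _ => (continuous_apply v).comp hTcont).smul
          continuous_const)
      exact (hBcomp.isClosed.inter h1)
    have hFcomp : IsCompact F := hBcomp.of_isClosed_subset hFclosed (Set.sep_subset _ _)
    -- key decomposition: normalizing T of a strict combination gives a strict combination
    have key : ∀ β1 ∈ B, ∀ β2 ∈ B, ∀ t u : ℝ, 0 < t → 0 < u → t + u = 1 →
        ∃ c d : ℝ, 0 < c ∧ 0 < d ∧ c + d = 1 ∧
          (∑ v, T (t • β1 + u • β2) v)⁻¹ • T (t • β1 + u • β2)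
            = c • ((∑ v, T β1 v)⁻¹ • T β1) + d • ((∑ v, T β2 v)⁻¹ • T β2) := by
      intro β1 hβ1 β2 hβ2 t u ht hu htu
      have hs1 : 0 < ∑ v, T β1 v := hsum β1 hβ1
      have hs2 : 0 < ∑ v, T β2 v := hsum β2 hβ2
      have hS : 0 < t * ∑ v, T β1 v + u * ∑ v, T β2 v := by positivity
      refine ⟨(t * ∑ v, T β1 v) / (t * ∑ v, T β1 v + u * ∑ v, T β2 v),
        (u * ∑ v, T β2 v) / (t * ∑ v, T β1 v + u * ∑ v, T β2 v),
        div_pos (by positivity) hS, div_pos (by positivity) hS, ?_, ?_⟩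
      · rw [← add_div, div_self hS.ne']
      · have hTlin : T (t • β1 + u • β2) = t • T β1 + u • T β2 := by
          simp [map_add, map_smul]
        rw [hTlin, norm_combo_aux (T β1) (T β2) t u hs1.ne' hs2.ne' hS.ne']
    -- F is convex
    have hFconv : Convex ℝ F := by
      rintro β1 ⟨hβ1B, hβ1⟩ β2 ⟨hβ2B, hβ2⟩ t u ht hu htu
      refine ⟨hB hβ1B hβ2B ht hu htu, ?_⟩
      have hTlin : T (t • β1 + u • β2) = t • T β1 + u • T β2 := by
        simp [map_add, map_smul]
      have hsum' : ∑ v, T (t • β1 + u • β2) v = t * ∑ v, T β1 v + u * ∑ v, T β2 v := by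
        rw [hTlin, sum_combo_aux]
      rw [hsum', hTlin, add_smul, mul_smul, mul_smul, ← hβ1, ← hβ2]
    -- F has an extreme point
    obtain ⟨β, hβext⟩ := hFcomp.extremePoints_nonempty ⟨β0, hβ0F⟩
    obtain ⟨⟨hβB, hβeq⟩, hβmin⟩ := hβext
    -- β is an extreme point of B
    have hβextB : β ∈ Set.extremePoints ℝ B := by
      refine ⟨hβB, ?_⟩
      rintro β1 hβ1B β2 hβ2B ⟨t, u, ht, hu, htu, hcombo⟩
      obtain ⟨c, d, hc, hd, hcd, hdecomp⟩ := key β1 hβ1B β2 hβ2B t u ht hu htu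
      rw [hcombo] at hdecomp
      have hgβ : (∑ v, T β v)⁻¹ • T β = g := (hginv β hβB).2 hβeq
      rw [hgβ] at hdecomp
      have hg1mem : ((∑ v, T β1 v)⁻¹ • T β1) ∈ normSet (T '' B) :=
        ⟨T β1, ⟨β1, hβ1B, rfl⟩, rfl⟩
      have hg2mem : ((∑ v, T β2 v)⁻¹ • T β2) ∈ normSet (T '' B) :=
        ⟨T β2, ⟨β2, hβ2B, rfl⟩, rfl⟩
      have := hgext hg1mem hg2mem ⟨c, d, hc, hd, hcd, hdecomp.symm⟩
      have hβ1F : β1 ∈ F := ⟨hβ1B, (hginv β1 hβ1B).1 this⟩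
      have this2 := hgext hg2mem hg1mem ⟨d, c, hd, hc, by rw [add_comm]; exact hcd,
        by rw [add_comm]; exact hdecomp.symm⟩
      have hβ2F : β2 ∈ F := ⟨hβ2B, (hginv β2 hβ2B).1 this2⟩
      exact hβmin hβ1F hβ2F ⟨t, u, ht, hu, htu, hcombo⟩
    exact ⟨T β, ⟨β, hβextB, rfl⟩, ((hginv β hβB).2 hβeq).symm⟩
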